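/- For any cycle τ = (k_1,...,k_r) with k_1 minimal, 2·P(B)(τ) = Q(B)(τ) + Q(B)(τ^{-1}), where Q(B)(k_1,...,k_r) = ∑_{i_2,...,i_r ∈ Z/2Z} (-1)^{i_2+...+i_r} B_{0,i_2+1}(k_1,k_2) B_{i_2,i_3+1}(k_2,k_3) ··· B_{i_r,1}(k_r,k_1) for r ≥ 2, and Q(B)(k_1) = B_{01}(k_1,k_1), and P(B)(τ) = (1/2)∑_{i_1,...,i_r ∈ Z/2Z} (-1)^{i_1+...+i_r} B_{i_1,i_2+1}(k_1,k_2) ··· B_{i_r,i_1+1}(k_r,k_1). -/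

import Mathlib

open Matrix
open scoped Classical

/-- The `(i,j)` entry (indices in `ZMod 2`) of the `2 × 2` block `B(r,s)` of `B`. -/
def Bblk {m : ℕ} (B : Matrix (Fin (2 * m)) (Fin (2 * m)) ℂ) (r s : Fin m)
    (i j : ZMod 2) : ℂ :=
  B ⟨2 * r.val + i.val, by have := r.isLt; have := ZMod.val_lt i; omega⟩
    ⟨2 * s.val + j.val, by have := s.isLt; have := ZMod.val_lt j; omega⟩

/-- `P(B)(τ)` for the cycle `τ = (k 0, …, k (r-1))`. -/
noncomputable def Pcyc {m r : ℕ} [NeZero r] (B : Matrix (Fin (2 * m)) (Fin (2 * m)) ℂ)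
    (k : Fin r → Fin m) : ℂ :=
  (1 / 2) * ∑ i : Fin r → ZMod 2,
    (∏ j, (-1 : ℂ) ^ (i j).val) * ∏ j, Bblk B (k j) (k (j + 1)) (i j) (i (j + 1) + 1)

/-- `Q(B)(τ)` for the cycle `τ = (k 0, …, k (r-1))`: the sum over
`i : Fin r → ZMod 2` with `i 0 = 0`.  For `r = 1` this is `B₀₁(k 0, k 0)`. -/
noncomputable def Qcyc {m r : ℕ} [NeZero r] (B : Matrix (Fin (2 * m)) (Fin (2 * m)) ℂ)
    (k : Fin r → Fin m) : ℂ :=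
  ∑ i ∈ Finset.univ.filter (fun i : Fin r → ZMod 2 => i 0 = 0),
    (∏ j, (-1 : ℂ) ^ (i j).val) * ∏ j, Bblk B (k j) (k (j + 1)) (i j) (i (j + 1) + 1)

lemma negpow (a : ZMod 2) : (-1 : ℂ) ^ ((a + 1 : ZMod 2)).val = -(-1) ^ a.val := by
  fin_cases a
  · show (-1 : ℂ) ^ ((0 + 1 : ZMod 2)).val = -(-1) ^ (0 : ZMod 2).val
    rw [show ((0 : ZMod 2) + 1).val = 1 from rfl, show (0 : ZMod 2).val = 0 from rfl]
    norm_num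
  · show (-1 : ℂ) ^ ((1 + 1 : ZMod 2)).val = -(-1) ^ (1 : ZMod 2).val
    rw [show ((1 : ZMod 2) + 1).val = 0 from rfl, show (1 : ZMod 2).val = 1 from rfl]
    norm_num

lemma zmod2_add_one_one (a : ZMod 2) : a + 1 + 1 = a := by
  fin_cases a <;> rfl

lemma zmod2_cases (a : ZMod 2) : a = 0 ∨ a = 1 := by
  fin_cases a
  · exact Or.inl rfl
  · exact Or.inr rfl

lemma prod_neg_fin {r : ℕ} (f : Fin r → ℂ) : ∏ x, -f x = (-1) ^ r * ∏ x, f x := by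
  calc ∏ x, -f x = ∏ x, (-1 : ℂ) * f x := by simp
    _ = (∏ _x : Fin r, (-1 : ℂ)) * ∏ x, f x := Finset.prod_mul_distrib
    _ = (-1) ^ r * ∏ x, f x := by simp

theorem two_P_eq_Q_add_Q_inv (m r : ℕ) [NeZero r]
    (B : Matrix (Fin (2 * m)) (Fin (2 * m)) ℂ) (hB : Bᵀ = -B)
    (k : Fin r → Fin m) (hk : Function.Injective k) (hmin : ∀ j, k 0 ≤ k j) :
    2 * Pcyc B k = Qcyc B k + Qcyc B (fun j => k (-j)) := by
  have skew : ∀ (r' s' : Fin m) (i j : ZMod 2),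
      Bblk B r' s' i j = - Bblk B s' r' j i := by
    intro r' s' i j
    unfold Bblk
    have h := congrFun (congrFun hB
      ⟨2 * s'.val + j.val, by have := s'.isLt; have := ZMod.val_lt j; omega⟩)
      ⟨2 * r'.val + i.val, by have := r'.isLt; have := ZMod.val_lt i; omega⟩
    simp only [Matrix.transpose_apply, Matrix.neg_apply] at h
    exact h
  have hinv : Function.Involutive (fun j : Fin r => -j - 1) := by
    intro j; show -(-j - 1) - 1 = j; rw [neg_sub, sub_neg_eq_add, add_sub_cancel_left]
  unfold Pcyc
  rw [← mul_assoc, show (2 : ℂ) * (1 / 2) = 1 by norm_num, one_mul,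
    ← Finset.sum_filter_add_sum_filter_not Finset.univ
    (fun i : Fin r → ZMod 2 => i 0 = 0)]
  congr 1
  unfold Qcyc
  refine Finset.sum_nbij' (fun i => fun j => i (-j) + 1) (fun i => fun j => i (-j) + 1)
    ?_ ?_ ?_ ?_ ?_
  · intro i hi
    simp only [Finset.mem_filter, Finset.mem_univ, true_and] at hi ⊢
    have h1 : i 0 = 1 := (zmod2_cases (i 0)).resolve_left hi
    show i (-0) + 1 = 0
    rw [neg_zero, h1]; rfl
  · intro i hi
    simp only [Finset.mem_filter, Finset.mem_univ, true_and] at hi ⊢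
    show ¬ (i (-0) + 1 = 0)
    rw [neg_zero, hi]
    exact one_ne_zero
  · intro i _; funext j; show i (- -j) + 1 + 1 = i j
    rw [neg_neg, zmod2_add_one_one]
  · intro i _; funext j; show i (- -j) + 1 + 1 = i j
    rw [neg_neg, zmod2_add_one_one]
  · intro i _
    have hsign : (∏ j, (-1 : ℂ) ^ ((i (-j) + 1 : ZMod 2)).val)
        = (-1 : ℂ) ^ r * ∏ j, (-1 : ℂ) ^ (i j).val := by
      rw [Fintype.prod_equiv (Equiv.neg (Fin r))
        (fun j => (-1 : ℂ) ^ ((i (-j) + 1 : ZMod 2)).val)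
        (fun j => (-1 : ℂ) ^ ((i j + 1 : ZMod 2)).val) (fun x => rfl)]
      simp only [negpow]
      exact prod_neg_fin _
    have hprod : (∏ j, Bblk B (k (-j)) (k (-(j + 1))) (i (-j) + 1) (i (-(j + 1)) + 1 + 1))
        = (-1 : ℂ) ^ r * ∏ j, Bblk B (k j) (k (j + 1)) (i j) (i (j + 1) + 1) := by
      have step : ∀ j : Fin r,
          Bblk B (k (-j)) (k (-(j + 1))) (i (-j) + 1) (i (-(j + 1)) + 1 + 1)
          = - Bblk B (k (-j - 1)) (k (-j - 1 + 1)) (i (-j - 1)) (i (-j - 1 + 1) + 1) := by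
        intro j
        rw [zmod2_add_one_one]
        have h1 : -(j + 1) = -j - 1 := by rw [neg_add']
        have h2 : -j - 1 + 1 = -j := by rw [sub_add_cancel]
        rw [h1, h2, skew]
      calc (∏ j, Bblk B (k (-j)) (k (-(j + 1))) (i (-j) + 1) (i (-(j + 1)) + 1 + 1))
          = ∏ j, - Bblk B (k (-j - 1)) (k (-j - 1 + 1)) (i (-j - 1)) (i (-j - 1 + 1) + 1) :=
            Finset.prod_congr rfl (fun j _ => step j)
        _ = ∏ j, - Bblk B (k j) (k (j + 1)) (i j) (i (j + 1) + 1) :=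
            Fintype.prod_equiv hinv.toPerm _ _ (fun x => rfl)
        _ = (-1 : ℂ) ^ r * ∏ j, Bblk B (k j) (k (j + 1)) (i j) (i (j + 1) + 1) :=
            prod_neg_fin _
    show (∏ x, (-1 : ℂ) ^ (i x).val) * ∏ x, Bblk B (k x) (k (x + 1)) (i x) (i (x + 1) + 1)
      = (∏ x, (-1 : ℂ) ^ ((i (-x) + 1 : ZMod 2)).val) *
        ∏ x, Bblk B (k (-x)) (k (-(x + 1))) (i (-x) + 1) (i (-(x + 1)) + 1 + 1)
    rw [hsign, hprod, mul_mul_mul_comm, ← pow_add, Even.neg_one_pow ⟨r, rfl⟩, one_mul]
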